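/- Let E(ρ) = Σ_{i∈I} E_i ρ E_iᴴ be a super-operator on d×d complex matrices, with Schrödinger–Heisenberg dual E*(A) = Σ_{i∈I} E_iᴴ A E_i, and let P be a projection. Then for every positive semidefinite d×d matrix ρ: supp(E(ρ)) ⊆ range(P) if and only if supp(ρ) is contained in the orthogonal complement (with respect to the standard inner product on ℂ^d) of supp(E*(I − P)). -/

import Mathlib

open Matrix ComplexOrder

/-- The super-operator with Kraus operators `(E_i)`: `ρ ↦ Σ_i E_i ρ E_iᴴ`. -/
noncomputable def superOp {d : ℕ} {I : Type} [Fintype I]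
    (E : I → Matrix (Fin d) (Fin d) ℂ) (ρ : Matrix (Fin d) (Fin d) ℂ) :
    Matrix (Fin d) (Fin d) ℂ :=
  ∑ i, E i * ρ * (E i)ᴴ

/-- The support of a matrix, viewed as a subspace of Euclidean space `ℂ^d`:
the range of the associated linear map. -/
noncomputable def msupp {d : ℕ} (ρ : Matrix (Fin d) (Fin d) ℂ) :
    Submodule ℂ (EuclideanSpace ℂ (Fin d)) :=
  LinearMap.range (Matrix.toEuclideanLin ρ)

/- Auxiliary lemmas -/

lemma toEuclideanLin_mul' {d : ℕ} (M N : Matrix (Fin d) (Fin d) ℂ) :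
    Matrix.toEuclideanLin (M * N) =
      (Matrix.toEuclideanLin M).comp (Matrix.toEuclideanLin N) := by
  apply LinearMap.ext
  intro x
  simp [Matrix.toEuclideanLin_apply, Matrix.mulVec_mulVec]

lemma msupp_le_ker_iff {d : ℕ} (M N : Matrix (Fin d) (Fin d) ℂ) :
    msupp M ≤ LinearMap.ker (Matrix.toEuclideanLin N) ↔ N * M = 0 := by
  constructor
  · intro h
    rw [← Matrix.toEuclideanLin.map_eq_zero_iff, toEuclideanLin_mul']
    apply LinearMap.ext
    intro x
    have := h (LinearMap.mem_range_self (Matrix.toEuclideanLin M) x)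
    simpa [LinearMap.mem_ker] using this
  · intro h u hu
    obtain ⟨x, rfl⟩ := hu
    rw [LinearMap.mem_ker, ← LinearMap.comp_apply, ← toEuclideanLin_mul', h]
    simp

lemma orth_msupp_eq_ker {d : ℕ} (σ : Matrix (Fin d) (Fin d) ℂ) (hσ : σ.IsHermitian) :
    (msupp σ)ᗮ = LinearMap.ker (Matrix.toEuclideanLin σ) := by
  have hself : LinearMap.adjoint (Matrix.toEuclideanLin σ) = Matrix.toEuclideanLin σ := by
    rw [← Matrix.toEuclideanLin_conjTranspose_eq_adjoint, hσ.eq]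
  ext x
  simp only [msupp, Submodule.mem_orthogonal, LinearMap.mem_range, LinearMap.mem_ker,
    forall_exists_index]
  constructor
  · intro h
    rw [← inner_self_eq_zero (𝕜 := ℂ) (x := Matrix.toEuclideanLin σ x)]
    have := h (Matrix.toEuclideanLin σ (Matrix.toEuclideanLin σ x)) _ rfl
    rwa [← hself, LinearMap.adjoint_inner_left, hself] at this
  · intro h u y hy
    subst hy
    rw [← hself, LinearMap.adjoint_inner_left, h, inner_zero_right]

lemma range_proj_eq_ker {d : ℕ} (P : Matrix (Fin d) (Fin d) ℂ) (hP2 : P * P = P) :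
    LinearMap.range (Matrix.toEuclideanLin P) =
      LinearMap.ker (Matrix.toEuclideanLin ((1 : Matrix (Fin d) (Fin d) ℂ) - P)) := by
  have h1 : ∀ x : EuclideanSpace ℂ (Fin d),
      Matrix.toEuclideanLin (1 : Matrix (Fin d) (Fin d) ℂ) x = x := by
    intro x
    simp [Matrix.toEuclideanLin_apply]
  ext x
  constructor
  · rintro ⟨y, rfl⟩
    rw [LinearMap.mem_ker, ← LinearMap.comp_apply, ← toEuclideanLin_mul']
    have : ((1 : Matrix (Fin d) (Fin d) ℂ) - P) * P = 0 := by
      rw [sub_mul, one_mul, hP2, sub_self]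
    rw [this]
    simp
  · intro hx
    rw [LinearMap.mem_ker, map_sub, LinearMap.sub_apply, h1, sub_eq_zero] at hx
    exact ⟨x, hx.symm⟩

lemma eq_zero_of_trace_conjTranspose_mul_self {m n : ℕ} (A : Matrix (Fin m) (Fin n) ℂ)
    (h : (Aᴴ * A).trace = 0) : A = 0 := by
  have h' : ∑ j, ∑ i, Complex.normSq (A i j) = 0 := by
    have : ((∑ j, ∑ i, Complex.normSq (A i j) : ℝ) : ℂ) = 0 := by
      push_cast
      rw [← h]
      simp only [Matrix.trace, Matrix.diag_apply, Matrix.mul_apply,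
        Matrix.conjTranspose_apply, Complex.normSq_eq_conj_mul_self]
      rfl
    exact_mod_cast this
  have hnn : ∀ j ∈ Finset.univ, (0 : ℝ) ≤ ∑ i, Complex.normSq (A i j) := by
    intro j _
    exact Finset.sum_nonneg fun i _ => Complex.normSq_nonneg _
  ext i j
  have hj := (Finset.sum_eq_zero_iff_of_nonneg hnn).mp h' j (Finset.mem_univ j)
  have hi := (Finset.sum_eq_zero_iff_of_nonneg
    (fun i _ => Complex.normSq_nonneg (A i j))).mp hj i (Finset.mem_univ i)
  simpa using Complex.normSq_eq_zero.mp hi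

open scoped MatrixOrder in
lemma psd_mul_eq_zero_iff_trace {d : ℕ} {σ τ : Matrix (Fin d) (Fin d) ℂ}
    (hσ : σ.PosSemidef) (hτ : τ.PosSemidef) :
    σ * τ = 0 ↔ (σ * τ).trace = 0 := by
  constructor
  · intro h; rw [h, Matrix.trace_zero]
  · intro h
    set s := CFC.sqrt σ with hs
    set t := CFC.sqrt τ with ht
    have hsH : sᴴ = s := (Matrix.nonneg_iff_posSemidef.mp (CFC.sqrt_nonneg σ)).isHermitian.eq
    have htH : tᴴ = t := (Matrix.nonneg_iff_posSemidef.mp (CFC.sqrt_nonneg τ)).isHermitian.eq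
    have hσ' : s * s = σ := CFC.sqrt_mul_sqrt_self σ hσ.nonneg
    have hτ' : t * t = τ := CFC.sqrt_mul_sqrt_self τ hτ.nonneg
    have hts : ((t * s)ᴴ * (t * s)).trace = 0 := by
      have : (t * s)ᴴ * (t * s) = s * (t * t) * s := by
        rw [Matrix.conjTranspose_mul, hsH, htH]
        noncomm_ring
      rw [this]
      have h2 : (s * (t * t) * s).trace = (σ * τ).trace := by
        rw [show s * (t * t) * s = s * ((t * t) * s) by noncomm_ring, Matrix.trace_mul_comm,
          show (t * t) * s * s = (t * t) * (s * s) by noncomm_ring, hσ', hτ',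
          Matrix.trace_mul_comm]
      rw [h2, h]
    have hts0 : t * s = 0 := eq_zero_of_trace_conjTranspose_mul_self _ hts
    have hst0 : s * t = 0 := by
      have := congrArg Matrix.conjTranspose hts0
      rwa [Matrix.conjTranspose_mul, hsH, htH, Matrix.conjTranspose_zero] at this
    calc σ * τ = s * (s * t) * t := by rw [← hσ', ← hτ']; noncomm_ring
    _ = 0 := by rw [hst0]; noncomm_ring

lemma psd_sum {d : ℕ} {I : Type} [Fintype I] (f : I → Matrix (Fin d) (Fin d) ℂ)
    (hf : ∀ i, (f i).PosSemidef) : (∑ i, f i).PosSemidef := by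
  classical
  induction (Finset.univ : Finset I) using Finset.induction_on with
  | empty => simpa using Matrix.PosSemidef.zero
  | insert _ _ hx ih =>
    rw [Finset.sum_insert hx]
    exact (hf _).add ih

/-- For a super-operator `E` with dual `E*(A) = Σ_i E_iᴴ A E_i` and a projection
`P`, for every positive semidefinite `ρ`:
`supp(E(ρ)) ⊆ range(P)` iff `supp(ρ) ⊆ (supp(E*(I − P)))ᗮ`. -/
theorem supp_superOp_le_range_iff {d : ℕ} {I : Type} [Fintype I]
    (E : I → Matrix (Fin d) (Fin d) ℂ)
    (P : Matrix (Fin d) (Fin d) ℂ) (hP1 : P.IsHermitian) (hP2 : P * P = P)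
    (ρ : Matrix (Fin d) (Fin d) ℂ) (hρ : ρ.PosSemidef) :
    msupp (superOp E ρ) ≤ LinearMap.range (Matrix.toEuclideanLin P) ↔
      msupp ρ ≤ (msupp (∑ i, (E i)ᴴ * ((1 : Matrix (Fin d) (Fin d) ℂ) - P) * E i))ᗮ := by
  set Q : Matrix (Fin d) (Fin d) ℂ := 1 - P with hQ
  set σ : Matrix (Fin d) (Fin d) ℂ := ∑ i, (E i)ᴴ * Q * E i with hσdef
  -- Q is a positive semidefinite projection
  have hQ2 : Q * Q = Q := by
    rw [hQ, sub_mul, mul_sub, mul_sub, hP2]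
    noncomm_ring
  have hQH : Qᴴ = Q := by
    rw [hQ, Matrix.conjTranspose_sub, Matrix.conjTranspose_one, hP1.eq]
  have hQpsd : Q.PosSemidef := by
    have : Qᴴ * Q = Q := by rw [hQH, hQ2]
    rw [← this]
    exact Matrix.posSemidef_conjTranspose_mul_self Q
  -- positivity facts
  have hEρ : (superOp E ρ).PosSemidef :=
    psd_sum _ fun i => hρ.mul_mul_conjTranspose_same (E i)
  have hσpsd : σ.PosSemidef :=
    psd_sum _ fun i => hQpsd.conjTranspose_mul_mul_same (E i)
  -- the crucial trace identity
  have htr : (Q * superOp E ρ).trace = (σ * ρ).trace := by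
    rw [superOp, Finset.mul_sum, Matrix.trace_sum, hσdef, Finset.sum_mul, Matrix.trace_sum]
    congr 1
    funext i
    rw [show Q * (E i * ρ * (E i)ᴴ) = (Q * E i * ρ) * (E i)ᴴ by noncomm_ring,
      Matrix.trace_mul_comm]
    congr 1
    noncomm_ring
  -- rewrite both sides as vanishing of matrix products
  rw [range_proj_eq_ker P hP2, msupp_le_ker_iff, ← hQ,
    
    orth_msupp_eq_ker _ hσpsd.isHermitian, msupp_le_ker_iff,    psd_mul_eq_zero_iff_trace hQpsd hEρ, psd_mul_eq_zero_iff_trace hσpsd hρ, htr]
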